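/- A nil subalgebra of a finite-dimensional associative algebra over a field is nilpotent: if A is a finite-dimensional associative algebra over a field k and B ⊆ A is a (not necessarily unital) subalgebra all of whose elements are nilpotent, then there exists n such that every product of n elements of B is zero. -/

import Mathlib

open Submodule

lemma prod_mem_pow_submodule {k A : Type*} [Field k] [Ring A] [Algebra k A]
    (S : Submodule k A) (l : List A) (hl : ∀ x ∈ l, x ∈ S) :
    l.prod ∈ S ^ l.length := by
  induction l with
  | nil =>
    rw [List.prod_nil, List.length_nil, pow_zero]
    exact one_le.mp le_rfl
  | cons a t ih =>
    rw [List.prod_cons, List.length_cons, pow_succ']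
    exact mul_mem_mul (hl a (by simp)) (ih fun x hx => hl x (by simp [hx]))

/-- Wedderburn: a nil subalgebra of a finite-dimensional associative algebra over a
field is nilpotent — some fixed-length products of its elements all vanish. -/
theorem nil_subalgebra_is_nilpotent (k : Type*) [Field k] (A : Type*) [Ring A]
    [Algebra k A] [FiniteDimensional k A] (B : NonUnitalSubalgebra k A)
    (hnil : ∀ b ∈ B, IsNilpotent b) :
    ∃ n : ℕ, 0 < n ∧ ∀ f : Fin n → A, (∀ i, f i ∈ B) → (List.ofFn f).prod = 0 := by
  set S : Submodule k A := B.toSubmodule with hS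
  have hSS : S * S ≤ S := mul_le.2 fun a ha b hb => B.mul_mem ha hb
  have hstep : ∀ m : ℕ, S ^ (m + 2) ≤ S ^ (m + 1) := fun m => by
    calc S ^ (m + 2) = S ^ m * (S * S) := by
          rw [pow_succ, pow_succ, mul_assoc]
    _ ≤ S ^ m * S := mul_le_mul_right hSS _
    _ = S ^ (m + 1) := (pow_succ S m).symm
  have hmono : ∀ m : ℕ, S ^ (m + 1) ≤ S := by
    intro m
    induction m with
    | zero => rw [pow_one]
    | succ n ih => exact (hstep n).trans ih
  have hwf : WellFounded ((· < ·) : Submodule k A → Submodule k A → Prop) :=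
    (inferInstance : IsArtinian k A).wf
  obtain ⟨C, hCmem, hmin⟩ := hwf.has_min (Set.range fun n : ℕ => S ^ (n + 1))
    ⟨S ^ (0 + 1), 0, rfl⟩
  obtain ⟨N, hCN⟩ := hCmem
  have hCN' : S ^ (N + 1) = C := hCN
  -- all later powers equal C
  have hall : ∀ j : ℕ, S ^ (N + 1 + j) = C := by
    intro j
    induction j with
    | zero => exact hCN'
    | succ i ih =>
      have hle : S ^ (N + 1 + (i + 1)) ≤ C := by
        have : N + 1 + (i + 1) = (N + i) + 2 := by ring
        rw [this]
        have : (N + i) + 1 = N + 1 + i := by ring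
        exact (hstep (N + i)).trans (by rw [this, ih])
      by_contra h
      exact hmin (S ^ (N + 1 + (i + 1))) ⟨N + i + 1, show S ^ (N + i + 1 + 1) = _ by congr 1; ring⟩
        (lt_of_le_of_ne hle h)
  have hCidem : C * C = C := by
    have : S ^ (N + 1) * S ^ (N + 1) = S ^ (N + 1 + (N + 1)) := (pow_add S _ _).symm
    rw [← hCN', this, hall (N + 1)]
    exact hCN'.symm
  have hCS : C ≤ S := hCN' ▸ hmono N
  have hCbot : C = ⊥ := by
    by_contra hne
    obtain ⟨W, ⟨hWC, hWne, hWeq⟩, hWmin⟩ := hwf.has_min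
      {W : Submodule k A | W ≤ C ∧ W ≠ ⊥ ∧ C * W = W} ⟨C, le_rfl, hne, hCidem⟩
    have hex : ∃ w ∈ W, C * span k {w} ≠ ⊥ := by
      by_contra h
      push_neg at h
      apply hWne
      rw [← hWeq, eq_bot_iff]
      refine mul_le.2 fun c hc w hw => ?_
      have hmem : c * w ∈ C * span k {w} := mul_mem_mul hc (subset_span rfl)
      rw [h w hw] at hmem
      exact hmem
    obtain ⟨w, hwW, hwne⟩ := hex
    set W' : Submodule k A := C * span k {w} with hW'
    have hW'W : W' ≤ W := by
      rw [← hWeq]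
      exact mul_le_mul_right (span_le.2 (by simpa using hwW)) C
    have hW'C : C * W' = W' := by rw [hW', ← mul_assoc, hCidem]
    have hW'eqW : W' = W := by
      by_contra h
      exact hWmin W' ⟨hW'W.trans hWC, hwne, hW'C⟩ (lt_of_le_of_ne hW'W h)
    have hw' : w ∈ W' := hW'eqW.symm ▸ hwW
    obtain ⟨c, hcC, hcw⟩ := mem_mul_span_singleton.mp hw'
    obtain ⟨m, hm⟩ := hnil c (hCS hcC)
    have hpow : ∀ j : ℕ, c ^ j * w = w := by
      intro j
      induction j with
      | zero => rw [pow_zero, one_mul]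
      | succ i ih => rw [pow_succ, mul_assoc, hcw, ih]
    have hwzero : w = 0 := by rw [← hpow m, hm, zero_mul]
    apply hwne
    rw [hW', hwzero, Submodule.span_zero_singleton, Submodule.mul_bot]
  refine ⟨N + 1, Nat.succ_pos N, fun f hf => ?_⟩
  have hprod : (List.ofFn f).prod ∈ S ^ (N + 1) := by
    have := prod_mem_pow_submodule S (List.ofFn f) (by
      intro x hx
      obtain ⟨i, rfl⟩ := List.mem_ofFn.mp hx
      exact hf i)
    simpa using this
  rw [hCN', hCbot] at hprod
  simpa using hprod
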